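/- Let f₁(u,v) := ∏_{i=1}^d 1/(-2λ_i) + ∏_{i=1}^d ((e^{2λ_i(u+v)} - 1)v/(e^{2λ_i v} - 1)) · (1 - 2∏_{i=1}^d (e^{λ_i v} - 1)/(λ_i v)) for real λ_1, ..., λ_d < 0 and u, v > 0. Then f₁(u,v) → 0 as simultaneously u → ∞ and v → 0. -/

import Mathlib

open Filter Finset

lemma exp_slope_tendsto (c : ℝ) :
    Tendsto (fun v : ℝ => (Real.exp (c * v) - 1) / v)
      (nhdsWithin (0 : ℝ) (Set.Ioi 0)) (nhds c) := by
  have hd : HasDerivAt (fun x : ℝ => Real.exp (c * x)) c 0 := by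
    have := (Real.hasDerivAt_exp (c * 0)).comp 0 ((hasDerivAt_id (0 : ℝ)).const_mul c)
    simpa [Function.comp_def] using this
  have h1 := hasDerivAt_iff_tendsto_slope.mp hd
  have h2 : Tendsto (slope (fun x : ℝ => Real.exp (c * x)) 0)
      (nhdsWithin (0 : ℝ) (Set.Ioi 0)) (nhds c) :=
    h1.mono_left (nhdsWithin_mono _ (fun x hx => ne_of_gt hx))
  refine h2.congr (fun v => ?_)
  simp [slope, Real.exp_zero, div_eq_inv_mul]


/-- The joint limit `f₁(u,v) → 0` as `u → ∞` and `v → 0⁺` for the error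
function of Theorem 5.5. -/
theorem f1_tendsto_zero (d : ℕ) (hd : 0 < d)
    (lam : Fin d → ℝ) (hlam : ∀ i, lam i < 0) :
    Tendsto
      (fun uv : ℝ × ℝ =>
        (∏ i : Fin d, 1 / (-(2 * lam i)))
          + (∏ i : Fin d,
              (Real.exp (2 * lam i * (uv.1 + uv.2)) - 1) * uv.2
                / (Real.exp (2 * lam i * uv.2) - 1))
            * (1 - 2 * ∏ i : Fin d, (Real.exp (lam i * uv.2) - 1) / (lam i * uv.2)))
      (atTop ×ˢ nhdsWithin (0 : ℝ) (Set.Ioi 0)) (nhds 0) := by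
  set l := (atTop : Filter ℝ) ×ˢ nhdsWithin (0 : ℝ) (Set.Ioi 0) with hl
  have hv : Tendsto (fun uv : ℝ × ℝ => uv.2) l (nhdsWithin (0 : ℝ) (Set.Ioi 0)) :=
    tendsto_snd
  have hpos : ∀ᶠ uv : ℝ × ℝ in l, 0 < uv.2 := hv self_mem_nhdsWithin
  have huv : Tendsto (fun uv : ℝ × ℝ => uv.1 + uv.2) l atTop := by
    refine tendsto_atTop_mono' l ?_ tendsto_fst
    exact hpos.mono fun uv h => le_of_lt (lt_add_of_pos_right _ h)
  -- limits of the factors in the middle product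
  have hP : Tendsto
      (fun uv : ℝ × ℝ => ∏ i : Fin d,
        (Real.exp (2 * lam i * (uv.1 + uv.2)) - 1) * uv.2
          / (Real.exp (2 * lam i * uv.2) - 1))
      l (nhds (∏ i : Fin d, (0 - 1) * (2 * lam i)⁻¹)) := by
    apply tendsto_finset_prod
    intro i _
    have hc : 2 * lam i < 0 := by nlinarith [hlam i]
    have harg : Tendsto (fun uv : ℝ × ℝ => 2 * lam i * (uv.1 + uv.2)) l atBot :=
      huv.const_mul_atTop_of_neg hc
    have hexp : Tendsto (fun uv : ℝ × ℝ => Real.exp (2 * lam i * (uv.1 + uv.2))) l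
        (nhds 0) := Real.tendsto_exp_atBot.comp harg
    have hnum : Tendsto (fun uv : ℝ × ℝ => Real.exp (2 * lam i * (uv.1 + uv.2)) - 1) l
        (nhds (0 - 1)) := hexp.sub tendsto_const_nhds
    have hrat : Tendsto (fun uv : ℝ × ℝ =>
        uv.2 / (Real.exp (2 * lam i * uv.2) - 1)) l (nhds (2 * lam i)⁻¹) := by
      have h := ((exp_slope_tendsto (2 * lam i)).inv₀ (ne_of_lt hc)).comp hv
      refine h.congr fun uv => ?_
      simp [inv_div]
    have := hnum.mul hrat
    refine this.congr fun uv => ?_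
    rw [mul_div_assoc]
  have hQ : Tendsto
      (fun uv : ℝ × ℝ => ∏ i : Fin d, (Real.exp (lam i * uv.2) - 1) / (lam i * uv.2))
      l (nhds (∏ i : Fin d, (1 : ℝ))) := by
    apply tendsto_finset_prod
    intro i _
    have h := ((exp_slope_tendsto (lam i)).comp hv).div_const (lam i)
    have hne : lam i ≠ 0 := ne_of_lt (hlam i)
    have heq : (lam i) / (lam i) = 1 := div_self hne
    rw [heq] at h
    refine h.congr fun uv => ?_
    simp only [Function.comp]
    rw [div_div, mul_comm uv.2 (lam i)]
  set C : ℝ := ∏ i : Fin d, 1 / (-(2 * lam i)) with hC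
  set L : ℝ := ∏ i : Fin d, (0 - 1) * (2 * lam i)⁻¹ with hLdef
  have hCL : C = L := by
    apply Finset.prod_congr rfl
    intro i _
    have : (2 * lam i) ≠ 0 := by nlinarith [hlam i]
    field_simp
    ring
  have key : Tendsto
      (fun uv : ℝ × ℝ =>
        C + (∏ i : Fin d,
              (Real.exp (2 * lam i * (uv.1 + uv.2)) - 1) * uv.2
                / (Real.exp (2 * lam i * uv.2) - 1))
            * (1 - 2 * ∏ i : Fin d, (Real.exp (lam i * uv.2) - 1) / (lam i * uv.2)))
      l (nhds (C + L * (1 - 2 * ∏ i : Fin d, (1 : ℝ)))) :=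
    tendsto_const_nhds.add (hP.mul (tendsto_const_nhds.sub (hQ.const_mul 2)))
  have hzero : C + L * (1 - 2 * ∏ i : Fin d, (1 : ℝ)) = 0 := by
    rw [hCL]
    simp
    ring
  rw [← hzero]
  exact key
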